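/- Let K be a finite field with q elements and let L be a field extension of K of degree n, with n ≥ 4 and r ≥ 2 such that r·n is even. Suppose there exists a 1-scattered K-subspace of K-dimension r·n/2 in some r-dimensional L-vector space. Then every (r(n−2)/2)-dimensional L-vector space contains an (n−3)-scattered K-subspace of K-dimension r·n/2, attaining the bound (r(n−2)/2)·n/(n−2) = rn/2. -/

import Mathlib

open Module

def IsHScattered (K L V : Type*) [Field K] [Field L] [Algebra K L]
    [AddCommGroup V] [Module L V] [Module K V] [IsScalarTower K L V]
    (h : ℕ) (U : Submodule K V) : Prop :=
  Submodule.span L (U : Set V) = ⊤ ∧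
  ∀ S : Submodule L V, Module.finrank L S = h →
    Module.finrank K ↥(U ⊓ S.restrictScalars K) ≤ h


private lemma arith10 (q a n d : ℕ) (hq : 2 ≤ q) (hnd : n + d = 2*a) (han : a + 2 ≤ n) :
    (q-1)*(q^a-1) + ((q^n-1)-(q-1))*(q^d-1) < (q^a-1)^2 := by
  obtain ⟨e, he, he2⟩ : ∃ e, n = a + e ∧ 2 ≤ e := ⟨n - a, by omega, by omega⟩
  have hae : a = d + e := by omega
  have hne : n = d + e + e := by omega
  have hYc : q ^ a = q ^ d * q ^ e := by rw [hae, pow_add]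
  have hN : q ^ n = q ^ d * q ^ e * q ^ e := by rw [hne, pow_add, pow_add]
  set Y := q ^ d with hY
  set c := q ^ e with hc
  have h1Y : 1 ≤ Y := Nat.one_le_pow _ _ (by omega)
  have h1c : q * q ≤ c := by
    calc q * q = q ^ 2 := (sq q).symm
    _ ≤ q ^ e := Nat.pow_le_pow_right (by omega) he2
  have h1Yc : 1 ≤ Y * c := Nat.one_le_iff_ne_zero.mpr (by positivity)
  rw [hYc, hN]
  have h1N : q ≤ Y * c * c := by nlinarith
  zify [h1Y, h1Yc, h1N, show 1 ≤ q by omega, show (1:ℕ) ≤ Y*c*c by nlinarith, show q - 1 ≤ Y*c*c - 1 by omega]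
  have key : ((Y:ℤ)*c-1)^2 - ((q-1)*((Y:ℤ)*c-1) + (((Y:ℤ)*c*c-1)-(q-1))*((Y:ℤ)-1))
      = Y*(c-1)*(c-q) := by ring
  have hcq : (q:ℤ) < c := by
    have : q * 1 < q * q := by nlinarith
    omega
  have hpos : 0 < (Y:ℤ)*(c-1)*(c-q) := by
    have : (0:ℤ) < Y := by exact_mod_cast h1Y
    have h2 : (0:ℤ) < c - 1 := by omega
    have h3 : (0:ℤ) < c - q := by omega
    positivity
  linarith

private lemma pair_indep10 {K L V : Type*} [Field K] [Field L] [Algebra K L]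
    [AddCommGroup V] [Module L V] [Module K V] [IsScalarTower K L V]
    {u : V} (hu : u ≠ 0) {α : L} (hα : α ∉ Set.range (algebraMap K L)) :
    LinearIndependent K ![u, α • u] := by
  rw [LinearIndependent.pair_iff]
  intro s t hst
  have h1 : (algebraMap K L s + algebraMap K L t * α) • u = 0 := by
    rw [add_smul, mul_smul]
    rw [algebraMap_smul, algebraMap_smul]
    exact hst
  have h2 : algebraMap K L s + algebraMap K L t * α = 0 := by
    rcases smul_eq_zero.mp h1 with h | h
    · exact h
    · exact absurd h hu
  have ht : t = 0 := by
    by_contra ht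
    have htL : algebraMap K L t ≠ 0 := by
      simpa using (algebraMap K L).injective.ne ht
    apply hα
    refine ⟨-s/t, ?_⟩
    rw [map_div₀, map_neg]
    field_simp at h2 ⊢
    linear_combination -h2
  subst ht
  simp only [map_zero, zero_mul, add_zero] at h2
  have hs : s = 0 := by
    have := (algebraMap K L).injective (h2.trans (map_zero _).symm)
    simpa using this
  exact ⟨hs, rfl⟩

private lemma scattered_disjoint10 {K L V : Type*} [Field K] [Field L] [Algebra K L]
    [AddCommGroup V] [Module L V] [Module K V] [IsScalarTower K L V]
    [FiniteDimensional K V]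
    {U : Submodule K V} (hU : IsHScattered K L V 1 U)
    {α : L} (hα : α ∉ Set.range (algebraMap K L)) :
    U ⊓ U.map ((LinearMap.lsmul L V α).restrictScalars K) = ⊥ := by
  rw [Submodule.eq_bot_iff]
  rintro x ⟨hxU, y, hyU, rfl⟩
  simp only [LinearMap.coe_restrictScalars, LinearMap.lsmul_apply] at hxU ⊢
  by_contra hx
  have hy : y ≠ 0 := by rintro rfl; simp at hx
  set S : Submodule L V := Submodule.span L {y} with hS
  have hSr : Module.finrank L ↥S = 1 := finrank_span_singleton hy
  have hle := hU.2 S hSr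
  -- y and α • y are both in U ⊓ S.restrictScalars K
  have hyS : y ∈ S.restrictScalars K := Submodule.mem_span_singleton_self y
  have hαyS : α • y ∈ S.restrictScalars K := S.smul_mem α hyS
  set P := U ⊓ S.restrictScalars K with hP
  have h1 : y ∈ P := ⟨hyU, hyS⟩
  have h2 : α • y ∈ P := ⟨hxU, hαyS⟩
  have hli : LinearIndependent K ![y, α • y] := pair_indep10 hy hα
  set v : Fin 2 → ↥P := ![⟨y, h1⟩, ⟨α • y, h2⟩] with hv
  have hcomp : (P.subtype : ↥P → V) ∘ v = ![y, α • y] := by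
    funext i
    fin_cases i <;> rfl
  have hliv : LinearIndependent K v := by
    apply LinearIndependent.of_comp P.subtype
    rw [hcomp]; exact hli
  have := hliv.fintype_card_le_finrank
  simp only [Fintype.card_fin] at this
  omega

private lemma field_claim10 (K L : Type*) [Field K] [Fintype K] [Field L] [Algebra K L]
    [FiniteDimensional K L] {n : ℕ} (hn : Module.finrank K L = n) (hn4 : 4 ≤ n)
    (A : Submodule K L) (hA : Module.finrank K ↥A ≤ n - 2) :
    ∃ α : L, α ∉ Set.range (algebraMap K L) ∧
      A ⊔ A.map ((LinearMap.lsmul L L α).restrictScalars K) ≠ ⊤ := by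
  classical
  by_contra hcon
  push_neg at hcon
  have hcon' : ∀ α : L, α ∉ Set.range (algebraMap K L) →
      A ⊔ A.map ((LinearMap.lsmul L L α).restrictScalars K) = ⊤ := fun α hα =>
    hcon α hα
  haveI : Finite L := Module.finite_of_finite K
  haveI : Fintype L := Fintype.ofFinite L
  set q := Fintype.card K with hq
  have hq2 : 2 ≤ q := Fintype.one_lt_card
  have hcardL : Fintype.card L = q ^ n := by rw [card_eq_pow_finrank (K := K), hn]
  -- injectivity of algebraMap
  have hinj : Function.Injective (algebraMap K L) := (algebraMap K L).injective
  -- there exists α ∉ range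
  have hex : ∃ α : L, α ∉ Set.range (algebraMap K L) := by
    by_contra hno
    push_neg at hno
    have hsurj : Function.Surjective (algebraMap K L) := fun x => hno x
    have := Fintype.card_le_of_surjective _ hsurj
    have : q ^ n ≤ q := by rw [← hcardL]; exact this
    have : q ^ n ≥ q ^ 2 := Nat.pow_le_pow_right (by omega) (by omega)
    nlinarith [sq_nonneg q]
  obtain ⟨α₀, hα₀⟩ := hex
  set a := Module.finrank K ↥A with ha
  -- each multiplication map is injective when α ≠ 0
  have hα_ne : ∀ α : L, α ∉ Set.range (algebraMap K L) → α ≠ 0 := by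
    rintro α hα rfl
    exact hα ⟨0, map_zero _⟩
  have hmapinj : ∀ α : L, α ≠ 0 →
      Function.Injective ((LinearMap.lsmul L L α).restrictScalars K) := by
    intro α hαne x y hxy
    simp only [LinearMap.coe_restrictScalars, LinearMap.lsmul_apply, smul_eq_mul] at hxy
    exact mul_left_cancel₀ hαne hxy
  have hmapdim : ∀ α : L, α ≠ 0 →
      Module.finrank K ↥(A.map ((LinearMap.lsmul L L α).restrictScalars K)) = a := by
    intro α hαne
    exact ((Submodule.equivMapOfInjective _ (hmapinj α hαne) A).finrank_eq).symm
  -- the intersection dimension is constant for α outside K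
  have hinf : ∀ α : L, α ∉ Set.range (algebraMap K L) →
      n + Module.finrank K ↥(A ⊓ A.map ((LinearMap.lsmul L L α).restrictScalars K)) = 2*a := by
    intro α hα
    have h1 := Submodule.finrank_sup_add_finrank_inf_eq A
      (A.map ((LinearMap.lsmul L L α).restrictScalars K))
    rw [hcon' α hα, hmapdim α (hα_ne α hα)] at h1
    rw [finrank_top] at h1
    rw [hn] at h1
    omega
  set d := Module.finrank K ↥(A ⊓ A.map ((LinearMap.lsmul L L α₀).restrictScalars K)) with hd
  have hnd : n + d = 2*a := hinf α₀ hα₀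
  have han : a + 2 ≤ n := by omega
  -- counting
  set s : Finset L := Finset.univ.filter (fun x => x ∈ A ∧ x ≠ 0) with hs
  have hcard_sub : ∀ B : Submodule K L, (Finset.univ.filter (fun x => x ∈ B ∧ x ≠ 0)).card
      = q ^ (Module.finrank K ↥B) - 1 := by
    intro B
    have e1 : (Finset.univ.filter (fun x => x ∈ B ∧ x ≠ 0)).card
        = Fintype.card {x : L // x ∈ B ∧ x ≠ 0} := (Fintype.card_subtype _).symm
    have e2 : Fintype.card {x : L // x ∈ B ∧ x ≠ 0} = Fintype.card ↥B - 1 := by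
      have e3 : Fintype.card {x : ↥B // x ≠ 0} = Fintype.card ↥B - 1 := by
        have h4 := Fintype.card_subtype_compl (fun x : ↥B => x = 0)
        have h5 : Fintype.card {x : ↥B // x = 0} = 1 := Fintype.card_subtype_eq (0 : ↥B)
        calc Fintype.card {x : ↥B // x ≠ 0} = Fintype.card {x : ↥B // ¬ x = 0} := rfl
        _ = Fintype.card ↥B - Fintype.card {x : ↥B // x = 0} := h4
        _ = Fintype.card ↥B - 1 := by rw [h5]
      rw [← e3]
      apply Fintype.card_congr
      exact {
        toFun := fun x => ⟨⟨x.1, x.2.1⟩, by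
          intro h0
          exact x.2.2 (by simpa using congrArg Subtype.val h0)⟩
        invFun := fun y => ⟨y.1.1, y.1.2, by
          intro h0
          exact y.2 (Subtype.ext h0)⟩
        left_inv := fun x => rfl
        right_inv := fun y => rfl }
    rw [e1, e2, card_eq_pow_finrank (K := K) (V := ↥B)]
  have hscard : s.card = q ^ a - 1 := hcard_sub A
  -- fiberwise counting
  set t : Finset L := Finset.univ.erase 0 with ht
  have htcard : t.card = q ^ n - 1 := by
    rw [ht, Finset.card_erase_of_mem (Finset.mem_univ _), Finset.card_univ, hcardL]
  have hmem : ∀ p ∈ s ×ˢ s, p.1 * p.2⁻¹ ∈ t := by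
    rintro ⟨x, y⟩ hp
    simp only [Finset.mem_product, hs, Finset.mem_filter] at hp
    simp only [ht, Finset.mem_erase, Finset.mem_univ, and_true]
    exact mul_ne_zero hp.1.2.2 (inv_ne_zero hp.2.2.2)
  have hcount : (s ×ˢ s).card = ∑ α ∈ t, ((s ×ˢ s).filter (fun p => p.1 * p.2⁻¹ = α)).card :=
    Finset.card_eq_sum_card_fiberwise hmem
  -- bound each fiber
  have hfiber_inj : ∀ α ∈ t, Set.InjOn (fun p : L × L => p.1)
      ((s ×ˢ s).filter (fun p => p.1 * p.2⁻¹ = α)) := by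
    intro α hα p hp p' hp' hpp
    simp only [Finset.coe_filter, Set.mem_setOf_eq, Finset.mem_product, hs,
      Finset.mem_filter, Finset.mem_univ, true_and] at hp hp'
    have hpp1 : p.1 = p'.1 := hpp
    have heq2 : p.1 * p.2⁻¹ = p'.1 * p'.2⁻¹ := by rw [hp.2, hp'.2]
    rw [hpp1] at heq2
    have hx' : p'.1 ≠ 0 := hp'.1.1.2
    have h2 : p.2 = p'.2 := inv_inj.mp (mul_left_cancel₀ hx' heq2)
    exact Prod.ext hpp1 h2
  -- generic fiber bound into s
  have hfiber_le_s : ∀ α ∈ t, ((s ×ˢ s).filter (fun p => p.1 * p.2⁻¹ = α)).card ≤ q ^ a - 1 := by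
    intro α hα
    rw [← hscard]
    apply Finset.card_le_card_of_injOn (fun p => p.1) _ (hfiber_inj α hα)
    intro p hp
    simp only [Finset.mem_coe, Finset.mem_filter, Finset.mem_product] at hp
    exact hp.1.1
  -- fiber bound for α outside K
  have hfiber_le : ∀ α : L, α ∉ Set.range (algebraMap K L) →
      ((s ×ˢ s).filter (fun p => p.1 * p.2⁻¹ = α)).card ≤ q ^ d - 1 := by
    intro α hα
    have hαne := hα_ne α hα
    have hdα : Module.finrank K ↥(A ⊓ A.map ((LinearMap.lsmul L L α).restrictScalars K)) = d := by
      have := hinf α hα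
      omega
    calc ((s ×ˢ s).filter (fun p => p.1 * p.2⁻¹ = α)).card
        ≤ (Finset.univ.filter (fun x : L =>
            x ∈ (A ⊓ A.map ((LinearMap.lsmul L L α).restrictScalars K)) ∧ x ≠ 0)).card := by
          apply Finset.card_le_card_of_injOn (fun p => p.1) _ (hfiber_inj α (by
            simp only [ht, Finset.mem_erase, Finset.mem_univ, and_true]
            exact hαne))
          rintro ⟨x, y⟩ hp
          simp only [Finset.mem_coe, Finset.mem_filter, Finset.mem_product, hs, Finset.mem_univ, true_and] at hp ⊢
          obtain ⟨⟨⟨hxA, hxne⟩, ⟨hyA, hyne⟩⟩, heq⟩ := hp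
          have hxy : x = α * y := by
            rw [← div_eq_mul_inv] at heq
            exact (div_eq_iff hyne).mp heq
          refine ⟨⟨hxA, ?_⟩, hxne⟩
          refine ⟨y, hyA, ?_⟩
          simp only [LinearMap.coe_restrictScalars, LinearMap.lsmul_apply, smul_eq_mul]
          exact hxy.symm
      _ = q ^ d - 1 := by rw [hcard_sub, hdα]
  -- split the sum
  have hsplit : ∑ α ∈ t, ((s ×ˢ s).filter (fun p => p.1 * p.2⁻¹ = α)).card
      ≤ (q-1)*(q^a-1) + ((q^n-1)-(q-1))*(q^d-1) := by
    have : ∑ α ∈ t, ((s ×ˢ s).filter (fun p => p.1 * p.2⁻¹ = α)).card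
        ≤ ∑ α ∈ t, (if α ∈ Set.range (algebraMap K L) then q^a-1 else q^d-1) := by
      apply Finset.sum_le_sum
      intro α hα
      by_cases hc : α ∈ Set.range (algebraMap K L)
      · rw [if_pos hc]; exact hfiber_le_s α hα
      · rw [if_neg hc]; exact hfiber_le α hc
    refine this.trans ?_
    rw [Finset.sum_ite]
    have hk1 : (t.filter (fun α => α ∈ Set.range (algebraMap K L))).card = q - 1 := by
      have : t.filter (fun α => α ∈ Set.range (algebraMap K L))
          = (Finset.univ.filter (fun α => α ∈ Set.range (algebraMap K L))).erase 0 := by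
        rw [ht, Finset.filter_erase]
      rw [this, Finset.card_erase_of_mem]
      · have himg : Finset.univ.filter (fun α : L => α ∈ Set.range (algebraMap K L))
            = Finset.univ.image (algebraMap K L) := by
          ext x
          simp [Set.mem_range, eq_comm]
        rw [himg, Finset.card_image_of_injective _ hinj, Finset.card_univ]
      · simp only [Finset.mem_filter, Finset.mem_univ, true_and]
        exact ⟨0, map_zero _⟩
    have hk2 : (t.filter (fun α => ¬ α ∈ Set.range (algebraMap K L))).card = (q^n-1)-(q-1) := by
      have := Finset.card_filter_add_card_filter_not
        (s := t) (p := fun α => α ∈ Set.range (algebraMap K L))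
      omega
    rw [Finset.sum_const, Finset.sum_const, hk1, hk2]
    simp only [smul_eq_mul]
    exact le_rfl
  have hPcard : (s ×ˢ s).card = (q^a-1)^2 := by
    rw [Finset.card_product, hscard]; ring
  have hfinal := arith10 q a n d hq2 hnd han
  omega

private lemma hyperplane10 {K L V₀ : Type*} [Field K] [Fintype K] [Field L] [Algebra K L]
    [AddCommGroup V₀] [Module L V₀] [Module K V₀] [IsScalarTower K L V₀]
    [FiniteDimensional K L] [FiniteDimensional L V₀]
    {n r : ℕ} (hn : Module.finrank K L = n) (hn4 : 4 ≤ n)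
    (hV₀ : Module.finrank L V₀ = r)
    (U₀ : Submodule K V₀) (hU₀ : IsHScattered K L V₀ 1 U₀)
    (hU₀dim : 2 * Module.finrank K ↥U₀ = r * n)
    (lam : V₀ →ₗ[L] L) (hlam : lam ≠ 0)
    (A : Submodule K L) (hA : Module.finrank K ↥A ≤ n - 2)
    (hsub : ∀ u ∈ U₀, lam u ∈ A) : False := by
  haveI : FiniteDimensional K V₀ := Module.Finite.trans L V₀
  obtain ⟨α, hαK, hαsup⟩ := field_claim10 K L hn hn4 A hA
  have hαne : α ≠ 0 := by rintro rfl; exact hαK ⟨0, map_zero _⟩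
  have hdimV₀ : Module.finrank K V₀ = r * n := by
    rw [← Module.finrank_mul_finrank K L V₀, hn, hV₀, mul_comm]
  set σ := (LinearMap.lsmul L V₀ α).restrictScalars K with hσ
  have hσinj : Function.Injective σ := by
    intro x y hxy
    simp only [hσ, LinearMap.coe_restrictScalars, LinearMap.lsmul_apply] at hxy
    have := congrArg (fun z => α⁻¹ • z) hxy
    simpa [smul_smul, inv_mul_cancel₀ hαne] using this
  have hdisj : U₀ ⊓ U₀.map σ = ⊥ := scattered_disjoint10 hU₀ hαK
  have hmapdim : Module.finrank K ↥(U₀.map σ) = Module.finrank K ↥U₀ :=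
    ((Submodule.equivMapOfInjective _ hσinj U₀).finrank_eq).symm
  have hsup_top : U₀ ⊔ U₀.map σ = ⊤ := by
    apply Submodule.eq_top_of_finrank_eq
    have h1 := Submodule.finrank_sup_add_finrank_inf_eq U₀ (U₀.map σ)
    rw [hdisj, finrank_bot, hmapdim] at h1
    omega
  -- surjectivity of lam
  have hsurj : ∀ x : L, ∃ v, lam v = x := by
    intro x
    have : ∃ v₀, lam v₀ ≠ 0 := by
      by_contra hno
      push_neg at hno
      exact hlam (LinearMap.ext fun v => hno v)
    obtain ⟨v₀, hv₀⟩ := this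
    exact ⟨(x * (lam v₀)⁻¹) • v₀, by
      rw [map_smul, smul_eq_mul, mul_assoc, inv_mul_cancel₀ hv₀, mul_one]⟩
  apply hαsup
  rw [Submodule.eq_top_iff']
  intro x
  obtain ⟨v, rfl⟩ := hsurj x
  have hv : v ∈ U₀ ⊔ U₀.map σ := by rw [hsup_top]; exact Submodule.mem_top
  obtain ⟨u, hu, w, hw, rfl⟩ := Submodule.mem_sup.mp hv
  obtain ⟨u', hu', rfl⟩ := hw
  rw [map_add]
  apply Submodule.add_mem_sup (hsub u hu)
  refine ⟨lam u', hsub u' hu', ?_⟩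
  simp only [hσ, LinearMap.coe_restrictScalars, LinearMap.lsmul_apply, map_smul,
    smul_eq_mul]

private lemma dual_family10 {K M : Type*} [Field K] [AddCommGroup M] [Module K M]
    [FiniteDimensional K M] {m : ℕ} (g : Fin m → (M →ₗ[K] K))
    (hg : LinearIndependent K g) :
    ∃ u : Fin m → M, ∀ i j, g i (u j) = if i = j then 1 else 0 := by
  classical
  set Φ : M →ₗ[K] (Fin m → K) := LinearMap.pi g with hΦ
  have hsurj : Function.Surjective Φ := by
    by_contra hno
    have hrange : LinearMap.range Φ ≠ ⊤ := by
      intro h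
      exact hno (LinearMap.range_eq_top.mp h)
    obtain ⟨w, hw⟩ : ∃ w : Fin m → K, w ∉ LinearMap.range Φ := by
      by_contra hall
      push_neg at hall
      exact hrange (Submodule.eq_top_iff'.mpr hall)
    set R := LinearMap.range Φ with hR
    have hwz : R.mkQ w ≠ 0 := by
      intro h
      exact hw ((Submodule.Quotient.mk_eq_zero R).mp h)
    obtain ⟨φ, hφ⟩ : ∃ φ : Module.Dual K ((Fin m → K) ⧸ R), φ (R.mkQ w) ≠ 0 := by
      by_contra hall
      push_neg at hall
      exact hwz ((Module.forall_dual_apply_eq_zero_iff K _).mp hall)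
    set ξ : (Fin m → K) →ₗ[K] K := φ.comp R.mkQ with hξ
    have hξΦ : ∀ v : M, ξ (Φ v) = 0 := by
      intro v
      have : Φ v ∈ R := LinearMap.mem_range_self _ v
      simp only [hξ, LinearMap.comp_apply]
      have hz : R.mkQ (Φ v) = 0 := (Submodule.Quotient.mk_eq_zero R).mpr this
      rw [hz]
      exact map_zero φ
    set c : Fin m → K := fun i => ξ (fun j => if i = j then 1 else 0) with hc
    have hxi : ∀ x : Fin m → K, ξ x = ∑ i, x i * c i := by
      intro x
      conv_lhs => rw [pi_eq_sum_univ x]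
      rw [map_sum]
      congr 1
      funext i
      rw [map_smul, smul_eq_mul]
    have hzero : ∀ i, c i = 0 := by
      have hlin : ∑ i, c i • g i = 0 := by
        apply LinearMap.ext
        intro v
        simp only [LinearMap.sum_apply, LinearMap.smul_apply, smul_eq_mul,
          LinearMap.zero_apply]
        have := hξΦ v
        rw [hxi (Φ v)] at this
        simpa [hΦ, mul_comm] using this
      exact Fintype.linearIndependent_iff.mp hg c hlin
    apply hφ
    have : ξ w = 0 := by
      rw [hxi]
      simp [hzero]
    simpa [hξ] using this
  choose u hu using fun j => hsurj (fun i => if i = j then 1 else 0)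
  refine ⟨u, fun i j => ?_⟩
  have := congrFun (hu j) i
  simpa [hΦ, LinearMap.pi_apply] using this

set_option maxHeartbeats 2000000 in
set_option synthInstance.maxHeartbeats 1000000 in
theorem stmt10 (n r : ℕ) (K L V₀ V : Type*) [Field K] [Fintype K] [Field L] [Algebra K L]
    [AddCommGroup V₀] [Module L V₀] [Module K V₀] [IsScalarTower K L V₀]
    [AddCommGroup V] [Module L V] [Module K V] [IsScalarTower K L V]
    [FiniteDimensional K L] [FiniteDimensional L V₀] [FiniteDimensional L V]
    (hn : Module.finrank K L = n) (hn4 : 4 ≤ n) (hr2 : 2 ≤ r) (heven : 2 ∣ r * n)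
    (hV₀ : Module.finrank L V₀ = r)
    (U₀ : Submodule K V₀) (hU₀ : IsHScattered K L V₀ 1 U₀)
    (hU₀dim : 2 * Module.finrank K ↥U₀ = r * n)
    (hV : Module.finrank L V = r * (n - 2) / 2) :
    ∃ U : Submodule K V, IsHScattered K L V (n - 3) U ∧
      2 * Module.finrank K ↥U = r * n := by
  classical
  haveI : FiniteDimensional K V₀ := Module.Finite.trans L V₀
  haveI : FiniteDimensional K V := Module.Finite.trans L V
  set k := Module.finrank K ↥U₀ with hk
  have hk2 : 2 * k = r * n := hU₀dim
  haveI instTower : IsScalarTower K L (↥U₀ →ₗ[K] L) :=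
    ⟨fun c x f => LinearMap.ext fun u => smul_assoc c x (f u)⟩
  set b := Module.finBasis K ↥U₀ with hb
  haveI : FiniteDimensional L (↥U₀ →ₗ[K] L) := Module.Finite.equiv (b.constr L (M' := L))
  have hHrank : Module.finrank L (↥U₀ →ₗ[K] L) = k := by
    rw [← (b.constr L (M' := L)).finrank_eq, finrank_pi, Fintype.card_fin]
  -- the evaluation map from the L-dual of V₀
  set ev : Module.Dual L V₀ →ₗ[L] (↥U₀ →ₗ[K] L) :=
    { toFun := fun lam => (lam.restrictScalars K).comp U₀.subtype
      map_add' := fun f g => rfl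
      map_smul' := fun c f => rfl } with hev
  have hevinj : Function.Injective ev := by
    rw [injective_iff_map_eq_zero]
    intro lam hlam
    apply LinearMap.ext_on hU₀.1
    intro u hu
    have := congrFun (congrArg (fun (F : ↥U₀ →ₗ[K] L) => (F : ↥U₀ → L)) hlam) ⟨u, hu⟩
    exact this
  set E : Submodule L (↥U₀ →ₗ[K] L) := LinearMap.range ev with hE
  have hErank : Module.finrank L ↥E = r := by
    rw [hE, LinearMap.finrank_range_of_inj hevinj, Subspace.dual_finrank_eq, hV₀]
  -- the K-subspace of K-valued maps
  set Dmap : (↥U₀ →ₗ[K] K) →ₗ[K] (↥U₀ →ₗ[K] L) :=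
    { toFun := fun g => (Algebra.linearMap K L).comp g
      map_add' := fun f g => by ext u; simp
      map_smul' := fun c f => by ext u; simp [Algebra.smul_def] } with hDmap
  have hDinj : Function.Injective Dmap := by
    rw [injective_iff_map_eq_zero]
    intro g hg
    ext u
    have := congrFun (congrArg (fun (F : ↥U₀ →ₗ[K] L) => (F : ↥U₀ → L)) hg) u
    simp only [hDmap, LinearMap.coe_comp, Function.comp_apply, Algebra.linearMap_apply,
      LinearMap.coe_mk, AddHom.coe_mk, LinearMap.zero_apply] at this ⊢
    exact (algebraMap K L).injective (by simpa using this)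
  set D : Submodule K (↥U₀ →ₗ[K] L) := LinearMap.range Dmap with hD
  have hDrank : Module.finrank K ↥D = k := by
    rw [hD, LinearMap.finrank_range_of_inj hDinj, Subspace.dual_finrank_eq]
  -- elements of D ∩ E are zero
  have hDE : ∀ x : (↥U₀ →ₗ[K] L), x ∈ D → x ∈ E → x = 0 := by
    intro x hxD hxE
    by_contra hx0
    obtain ⟨lam, rfl⟩ := hxE
    have hlam : lam ≠ 0 := by rintro rfl; exact hx0 (map_zero ev)
    obtain ⟨g, hg⟩ := hxD
    set A1 : Submodule K L := LinearMap.range (Algebra.linearMap K L) with hA1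
    have hA1rank : Module.finrank K ↥A1 = 1 := by
      rw [hA1, LinearMap.finrank_range_of_inj, finrank_self]
      intro x y hxy
      exact (algebraMap K L).injective hxy
    refine hyperplane10 hn hn4 hV₀ U₀ hU₀ hU₀dim lam hlam A1 (by omega) ?_
    intro u hu
    have h1 : lam u = (ev lam) ⟨u, hu⟩ := rfl
    rw [h1, ← hg]
    exact ⟨g ⟨u, hu⟩, rfl⟩
  -- the quotient space and the isomorphism with V
  have hQrank : Module.finrank L ((↥U₀ →ₗ[K] L) ⧸ E) = Module.finrank L V := by
    have h1 := Submodule.finrank_quotient_add_finrank E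
    rw [hHrank, hErank] at h1
    have hmul : r * (n - 2) = r * n - 2 * r := by
      rw [Nat.mul_sub]; ring_nf
    rw [hV]
    omega
  set e : ((↥U₀ →ₗ[K] L) ⧸ E) ≃ₗ[L] V := LinearEquiv.ofFinrankEq _ _ hQrank with he
  set ℓ : (↥U₀ →ₗ[K] L) →ₗ[L] V := e.toLinearMap ∘ₗ E.mkQ with hℓ
  have hℓsurj : Function.Surjective ℓ := e.surjective.comp (Submodule.mkQ_surjective E)
  have hkerℓ : ∀ x : (↥U₀ →ₗ[K] L), ℓ x = 0 ↔ x ∈ E := by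
    intro x
    rw [hℓ]
    simp only [LinearMap.coe_comp, Function.comp_apply, LinearEquiv.coe_coe]
    constructor
    · intro h
      have : E.mkQ x = 0 := by
        apply e.injective
        rw [h, map_zero]
      exact (Submodule.Quotient.mk_eq_zero E).mp this
    · intro h
      have : E.mkQ x = 0 := (Submodule.Quotient.mk_eq_zero E).mpr h
      rw [this, map_zero]
  set φK : (↥U₀ →ₗ[K] L) →ₗ[K] V := ℓ.restrictScalars K with hφK
  set U : Submodule K V := Submodule.map φK D with hU
  -- dimension of U
  set ψ : ↥D →ₗ[K] V := φK.comp D.subtype with hψ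
  have hψinj : Function.Injective ψ := by
    rw [injective_iff_map_eq_zero]
    rintro ⟨x, hxD⟩ hx
    have hx' : ℓ x = 0 := hx
    have := hDE x hxD ((hkerℓ x).mp hx')
    exact Subtype.ext this
  have hrangeψ : LinearMap.range ψ = U := by
    rw [hψ, LinearMap.range_comp, Submodule.range_subtype, hU]
  have hUrank : Module.finrank K ↥U = k := by
    rw [← hrangeψ, LinearMap.finrank_range_of_inj hψinj, hDrank]
  -- spanning of D over L
  have hspanD : Submodule.span L (D : Set (↥U₀ →ₗ[K] L)) = ⊤ := by
    rw [eq_top_iff]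
    rintro f -
    have hf : f = ∑ i, f (b i) • Dmap (b.coord i) := by
      apply LinearMap.ext
      intro u
      rw [LinearMap.sum_apply]
      have : ∀ i, (f (b i) • Dmap (b.coord i)) u = (b.coord i u) • f (b i) := by
        intro i
        simp only [LinearMap.smul_apply, hDmap, LinearMap.coe_mk, AddHom.coe_mk,
          LinearMap.coe_comp, Function.comp_apply, Algebra.linearMap_apply,
          smul_eq_mul, Algebra.smul_def]
        ring
      rw [Finset.sum_congr rfl (fun i _ => this i)]
      conv_lhs => rw [← b.sum_repr u]
      rw [map_sum]
      apply Finset.sum_congr rfl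
      intro i _
      rw [map_smul, Basis.coord_apply]
    rw [hf]
    exact Submodule.sum_mem _ (fun i _ =>
      Submodule.smul_mem _ _ (Submodule.subset_span ⟨b.coord i, rfl⟩))
  -- spanning of U over L
  have hUspan : Submodule.span L (U : Set V) = ⊤ := by
    have hset : (U : Set V) = ℓ '' (D : Set (↥U₀ →ₗ[K] L)) := by
      rw [hU]
      rfl
    rw [hset, Submodule.span_image, hspanD, Submodule.map_top]
    exact LinearMap.range_eq_top.mpr hℓsurj
  -- the scattered property
  have hscat : ∀ S' : Submodule L V, Module.finrank L ↥S' = n - 3 →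
      Module.finrank K ↥(U ⊓ S'.restrictScalars K) ≤ n - 3 := by
    intro Sb hSbrank
    by_contra hbig
    push_neg at hbig
    have hge : n - 2 ≤ Module.finrank K ↥(U ⊓ Sb.restrictScalars K) := by omega
    obtain ⟨fP, hfP⟩ := exists_linearIndependent_of_le_finrank hge
    set v : Fin (n-2) → V := fun i => ((fP i : ↥(U ⊓ Sb.restrictScalars K)) : V) with hv
    have hvind : LinearIndependent K v :=
      hfP.map' (U ⊓ Sb.restrictScalars K).subtype (Submodule.ker_subtype _)
    have hvU : ∀ i, v i ∈ U := fun i => (fP i).2.1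
    have hvS : ∀ i, v i ∈ Sb := fun i => (fP i).2.2
    have hgex : ∀ i, ∃ gi : ↥U₀ →ₗ[K] K, φK (Dmap gi) = v i := by
      intro i
      obtain ⟨x, hxD, hx⟩ := hvU i
      obtain ⟨gi, rfl⟩ := hxD
      exact ⟨gi, hx⟩
    choose g hg using hgex
    set μ : Fin (n-2) → (↥U₀ →ₗ[K] L) := fun i => Dmap (g i) with hμ
    have hμK : LinearIndependent K μ := by
      apply LinearIndependent.of_comp φK
      have : (⇑φK ∘ μ) = v := by funext i; exact hg i
      rw [this]
      exact hvind
    have hgK : LinearIndependent K g := by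
      apply LinearIndependent.of_comp Dmap
      exact hμK
    obtain ⟨w, hw⟩ := dual_family10 g hgK
    have hμL : LinearIndependent L μ := by
      rw [Fintype.linearIndependent_iff]
      intro c hc j
      have := congrFun (congrArg (fun (F : ↥U₀ →ₗ[K] L) => (F : ↥U₀ → L)) hc) (w j)
      simp only [LinearMap.coe_sum, Finset.sum_apply, LinearMap.smul_apply,
        hμ, hDmap, LinearMap.coe_mk, AddHom.coe_mk, LinearMap.coe_comp,
        Function.comp_apply, Algebra.linearMap_apply, LinearMap.zero_apply,
        smul_eq_mul] at this
      have heach : ∀ i, c i * algebraMap K L (g i (w j)) = if i = j then c i else 0 := by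
        intro i
        rw [hw i j]
        by_cases hij : i = j
        · rw [if_pos hij, if_pos hij, map_one, mul_one]
        · rw [if_neg hij, if_neg hij, map_zero, mul_zero]
      rw [Finset.sum_congr rfl (fun i _ => heach i)] at this
      simpa using this
    set T : Submodule L (↥U₀ →ₗ[K] L) := Submodule.span L (Set.range μ) with hT
    have hTrank : Module.finrank L ↥T = n - 2 := by
      rw [hT, finrank_span_eq_card hμL, Fintype.card_fin]
    set S' : Submodule L (↥U₀ →ₗ[K] L) := Submodule.comap ℓ Sb with hS'
    have hTS : T ≤ S' := by
      rw [hT, Submodule.span_le]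
      rintro x ⟨i, rfl⟩
      show ℓ (μ i) ∈ Sb
      have : ℓ (μ i) = v i := hg i
      rw [this]
      exact hvS i
    have hES : E ≤ S' := by
      intro x hx
      show ℓ x ∈ Sb
      rw [(hkerℓ x).mpr hx]
      exact Sb.zero_mem
    have hS'rank : Module.finrank L ↥S' ≤ (n - 3) + r := by
      set ℓ' := ℓ.domRestrict S' with hℓ'
      have h1 := LinearMap.finrank_range_add_finrank_ker (K := L) (V := ↥S') (V₂ := V) ℓ'
      have h2 : Module.finrank L ↥(LinearMap.range ℓ') ≤ n - 3 := by
        rw [← hSbrank]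
        apply Submodule.finrank_mono
        rintro y ⟨⟨x, hx⟩, rfl⟩
        exact hx
      have h3 : Module.finrank L ↥(LinearMap.ker ℓ') ≤ r := by
        rw [← hErank]
        have hmem : ∀ x : ↥(LinearMap.ker ℓ'), ((x : ↥S') : (↥U₀ →ₗ[K] L)) ∈ E := by
          rintro ⟨⟨x, hxS⟩, hxk⟩
          apply (hkerℓ x).mp
          exact hxk
        set κ : ↥(LinearMap.ker ℓ') →ₗ[L] ↥E :=
          LinearMap.codRestrict E ((S'.subtype).comp (LinearMap.ker ℓ').subtype) hmem with hκ
        apply LinearMap.finrank_le_finrank_of_injective (f := κ)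
        intro x y hxy
        have h5 : (κ x : (↥U₀ →ₗ[K] L)) = (κ y : (↥U₀ →ₗ[K] L)) := congrArg Subtype.val hxy
        have h6 : ((x : ↥S') : (↥U₀ →ₗ[K] L)) = ((y : ↥S') : (↥U₀ →ₗ[K] L)) := h5
        exact Subtype.ext (Subtype.ext h6)
      omega
    have hsupinf := Submodule.finrank_sup_add_finrank_inf_eq T E
    have hsup_le : Module.finrank L ↥(T ⊔ E) ≤ (n - 3) + r := by
      refine le_trans (Submodule.finrank_mono ?_) hS'rank
      exact sup_le hTS hES
    have hinf_pos : 1 ≤ Module.finrank L ↥(T ⊓ E) := by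
      rw [hTrank, hErank] at hsupinf
      omega
    have hne : T ⊓ E ≠ ⊥ := by
      intro h
      rw [h, finrank_bot] at hinf_pos
      omega
    obtain ⟨x, hxTE, hxne⟩ := Submodule.exists_mem_ne_zero_of_ne_bot hne
    obtain ⟨hxT, hxE⟩ := hxTE
    obtain ⟨lam, hlam_eq⟩ := hxE
    have hlamne : lam ≠ 0 := by
      rintro rfl
      rw [map_zero] at hlam_eq
      exact hxne hlam_eq.symm
    obtain ⟨c, hc⟩ := (Submodule.mem_span_range_iff_exists_fun L).mp hxT
    set A₀ : Submodule K L := Submodule.span K (Set.range c) with hA₀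
    have hA₀rank : Module.finrank K ↥A₀ ≤ n - 2 := by
      rw [hA₀]
      refine le_trans (finrank_span_le_card _) ?_
      rw [Set.toFinset_range]
      exact le_trans (Finset.card_image_le) (by simp)
    refine hyperplane10 hn hn4 hV₀ U₀ hU₀ hU₀dim lam hlamne A₀ hA₀rank ?_
    intro u hu
    have h1 : lam u = x ⟨u, hu⟩ := by rw [← hlam_eq]; rfl
    rw [h1, ← hc]
    simp only [LinearMap.coe_sum, Finset.sum_apply, LinearMap.smul_apply,
      hμ, hDmap, LinearMap.coe_mk, AddHom.coe_mk, LinearMap.coe_comp,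
      Function.comp_apply, Algebra.linearMap_apply, smul_eq_mul]
    apply Submodule.sum_mem
    intro i _
    have : c i * algebraMap K L (g i ⟨u, hu⟩) = (g i ⟨u, hu⟩) • c i := by
      rw [Algebra.smul_def]; ring
    rw [this]
    exact Submodule.smul_mem _ _ (Submodule.subset_span (Set.mem_range_self i))
  exact ⟨U, ⟨hUspan, hscat⟩, by rw [hUrank]; exact hk2⟩
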